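/- Under the hypotheses of the single-step estimate for the nonsymmetric case, the full a posteriori bound holds: let $(e^{u,j})_{j=0}^K \subseteq X$ with $e^{u,0} = 0$ and $(e^{p,j})_{j=1}^K \subseteq Y$ satisfy, for every $1 \leq j \leq K$, $\tfrac{1}{\Delta t}m(e^{u,j}-e^{u,j-1},v) + a(e^{u,j},v) + b(v,e^{p,j}) = r^{1,j}(v)$ for all $v \in X$ and $b(e^{u,j},q) = r^{2,j}(q)$ for all $q \in Y$. Then for every $1 \leq k \leq K$: $\|e^{u,k}\|_m^2 + \Delta t \sum_{j=1}^k a(e^{u,j},e^{u,j}) \leq \Delta t \sum_{j=1}^k \Big[\tfrac{\|r^{1,j}\|_{X'}^2}{\alpha_a} + \tfrac{2}{\beta}\big(1+\tfrac{\gamma_a}{\alpha_a}\big)\|r^{1,j}\|_{X'}\|r^{2,j}\|_{Y'} + \big(\tfrac{\gamma_m}{\Delta t} + \tfrac{\gamma_a^2}{\alpha_a}\big)\tfrac{\|r^{2,j}\|_{Y'}^2}{\beta^2}\Big]$. -/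

import Mathlib

set_option maxHeartbeats 1000000

/-- Proposition 2.1: full a posteriori error bound, nonsymmetric case. -/
theorem stmt7 {X Y : Type*}
    [NormedAddCommGroup X] [InnerProductSpace ℝ X] [FiniteDimensional ℝ X]
    [NormedAddCommGroup Y] [InnerProductSpace ℝ Y] [FiniteDimensional ℝ Y]
    (b : X →ₗ[ℝ] Y →ₗ[ℝ] ℝ) (a m : X →ₗ[ℝ] X →ₗ[ℝ] ℝ)
    (β γa αa γm Δt : ℝ) (hβ : 0 < β) (hαa : 0 < αa) (hΔt : 0 < Δt)
    (hinfsup : ∀ q : Y, β * ‖q‖ ≤ ⨆ v : {v : X // v ≠ 0}, b (v : X) q / ‖(v : X)‖)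
    (habdd : ∀ u v : X, a u v ≤ γa * ‖u‖ * ‖v‖)
    (hacoer : ∀ v : X, αa * ‖v‖ ^ 2 ≤ a v v)
    (hmsym : ∀ u v : X, m u v = m v u)
    (hmpos : ∀ v : X, v ≠ 0 → 0 < m v v)
    (hmbdd : ∀ u v : X, m u v ≤ γm * ‖u‖ * ‖v‖)
    (K : ℕ) (eu : ℕ → X) (ep : ℕ → Y)
    (r1 : ℕ → X →L[ℝ] ℝ) (r2 : ℕ → Y →L[ℝ] ℝ)
    (heu0 : eu 0 = 0)
    (heq1 : ∀ j : ℕ, 1 ≤ j → j ≤ K → ∀ v : X,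
      (1 / Δt) * m (eu j - eu (j - 1)) v + a (eu j) v + b v (ep j) = r1 j v)
    (heq2 : ∀ j : ℕ, 1 ≤ j → j ≤ K → ∀ q : Y, b (eu j) q = r2 j q) :
    ∀ k : ℕ, 1 ≤ k → k ≤ K →
      m (eu k) (eu k) + Δt * ∑ j ∈ Finset.Icc 1 k, a (eu j) (eu j) ≤
        Δt * ∑ j ∈ Finset.Icc 1 k,
          (‖r1 j‖ ^ 2 / αa + (2 / β) * (1 + γa / αa) * ‖r1 j‖ * ‖r2 j‖ +
            (γm / Δt + γa ^ 2 / αa) * ‖r2 j‖ ^ 2 / β ^ 2) := by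
  by_cases hsub : Subsingleton X
  · -- degenerate case: X = {0}, hence Y = {0}
    have heuz : ∀ k, eu k = (0 : X) := fun k => Subsingleton.elim _ _
    haveI : IsEmpty {v : X // v ≠ 0} := ⟨fun v => v.2 (Subsingleton.elim _ _)⟩
    have hYz : ∀ q : Y, q = 0 := by
      intro q
      have h := hinfsup q
      rw [Real.iSup_of_isEmpty] at h
      have : ‖q‖ ≤ 0 := by nlinarith [norm_nonneg q]
      simpa using norm_le_zero_iff.mp this
    have hr1z : ∀ j, r1 j = 0 := by
      intro j; ext v; simp [Subsingleton.elim v (0 : X)]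
    have hr2z : ∀ j, r2 j = 0 := by
      intro j; ext q; simp [hYz q]
    intro k _ _
    simp [heuz, hr1z, hr2z]
  · -- main case
    rw [not_subsingleton_iff_nontrivial] at hsub
    obtain ⟨x0, hx0⟩ := exists_ne (0 : X)
    have hx0n : (0:ℝ) < ‖x0‖ := norm_pos_iff.mpr hx0
    have hγa : 0 < γa := by
      by_contra h
      push_neg at h
      have h2 : γa * (‖x0‖ * ‖x0‖) ≤ 0 :=
        mul_nonpos_iff.mpr (Or.inr ⟨h, mul_nonneg (norm_nonneg _) (norm_nonneg _)⟩)
      nlinarith [hacoer x0, habdd x0 x0, mul_pos hαa (mul_pos hx0n hx0n)]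
    have hγm : 0 < γm := by
      by_contra h
      push_neg at h
      have h2 : γm * (‖x0‖ * ‖x0‖) ≤ 0 :=
        mul_nonpos_iff.mpr (Or.inr ⟨h, mul_nonneg (norm_nonneg _) (norm_nonneg _)⟩)
      nlinarith [hmpos x0 hx0, hmbdd x0 x0]
    have hm0 : ∀ w : X, 0 ≤ m w w := by
      intro w
      rcases eq_or_ne w 0 with rfl | hw
      · simp
      · exact (hmpos w hw).le
    -- Cauchy-Schwarz for m
    have hCS : ∀ x v : X, (m x v) ^ 2 ≤ m x x * m v v := by
      intro x v
      rcases eq_or_ne v 0 with rfl | hv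
      · simp
      · have hvv := hmpos v hv
        have h := hm0 ((m v v) • x - (m x v) • v)
        simp only [map_sub, map_smul, LinearMap.sub_apply, LinearMap.smul_apply,
          smul_eq_mul] at h
        rw [hmsym v x] at h
        nlinarith [h, hvv]
    set s : ℝ := Real.sqrt γm with hs
    have hs0 : 0 ≤ s := Real.sqrt_nonneg _
    have hs2 : s ^ 2 = γm := Real.sq_sqrt hγm.le
    have hms : ∀ x v : X, m x v ≤ Real.sqrt (m x x) * (s * ‖v‖) := by
      intro x v
      have h1 : m v v ≤ γm * ‖v‖ ^ 2 := by nlinarith [hmbdd v v]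
      calc m x v ≤ |m x v| := le_abs_self _
        _ = Real.sqrt ((m x v) ^ 2) := (Real.sqrt_sq_eq_abs _).symm
        _ ≤ Real.sqrt (m x x * (γm * ‖v‖ ^ 2)) := by
            apply Real.sqrt_le_sqrt
            calc (m x v) ^ 2 ≤ m x x * m v v := hCS x v
              _ ≤ m x x * (γm * ‖v‖ ^ 2) := by
                  exact mul_le_mul_of_nonneg_left h1 (hm0 x)
        _ = Real.sqrt (m x x) * (s * ‖v‖) := by
            rw [Real.sqrt_mul (hm0 x), Real.sqrt_mul hγm.le, Real.sqrt_sq (norm_nonneg v)]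
    -- the single-step estimate
    have step : ∀ j : ℕ, 1 ≤ j → j ≤ K →
        m (eu j) (eu j) - m (eu (j-1)) (eu (j-1)) + Δt * a (eu j) (eu j) ≤
          Δt * (‖r1 j‖ ^ 2 / αa + (2 / β) * (1 + γa / αa) * ‖r1 j‖ * ‖r2 j‖ +
            (γm / Δt + γa ^ 2 / αa) * ‖r2 j‖ ^ 2 / β ^ 2) := by
      intro j hj1 hj2
      set u : X := eu j with hu
      set w : X := eu (j-1) with hw
      set p : Y := ep j with hp
      set R1 : ℝ := ‖r1 j‖ with hR1
      set R2 : ℝ := ‖r2 j‖ with hR2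
      set U : ℝ := ‖u‖ with hU
      set D : ℝ := Real.sqrt (m (u - w) (u - w)) with hD
      set P : ℝ := ‖p‖ with hPdef
      have hD0 : 0 ≤ D := Real.sqrt_nonneg _
      have hD2 : m (u - w) (u - w) = D ^ 2 := (Real.sq_sqrt (hm0 _)).symm
      have hR1n : 0 ≤ R1 := norm_nonneg _
      have hR2n : 0 ≤ R2 := norm_nonneg _
      have hU0 : 0 ≤ U := norm_nonneg _
      have e1 := heq1 j hj1 hj2 u
      have e2 := heq2 j hj1 hj2 p
      rw [e2] at e1
      -- e1 : (1/Δt) * m (u-w) u + a u u + r2 j p = r1 j u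
      have e1' : m (u - w) u = Δt * (r1 j u - a u u - r2 j p) := by
        have h : (1 / Δt) * m (u - w) u = r1 j u - a u u - r2 j p := by linarith [e1]
        have h3 : Δt * ((1 / Δt) * m (u - w) u) = m (u - w) u := by
          field_simp
        rw [← h3, h]
      have hid : m u u - m w w + m (u - w) (u - w) = 2 * m (u - w) u := by
        simp only [map_sub, LinearMap.sub_apply]
        linarith [hmsym u w]
      have heqm : m u u - m w w + Δt * a u u =
          2 * Δt * (r1 j u - r2 j p) - D ^ 2 - Δt * a u u := by
        rw [← hD2]; linarith [hid, e1']
      -- bounds on residual terms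
      have hr1u : r1 j u ≤ R1 * U := by
        have h := (r1 j).le_opNorm u
        rw [Real.norm_eq_abs] at h
        exact (le_abs_self _).trans h
      have hr2p : -(r2 j p) ≤ R2 * P := by
        have h := (r2 j).le_opNorm p
        rw [Real.norm_eq_abs] at h
        exact (neg_le_abs _).trans h
      -- inf-sup bound on the pressure error
      have hPb : β * P ≤ R1 + γa * U + s * D / Δt := by
        haveI : Nonempty {v : X // v ≠ 0} := ⟨⟨x0, hx0⟩⟩
        refine le_trans (hinfsup p) (ciSup_le ?_)
        intro v
        have hv0 : (0:ℝ) < ‖(v : X)‖ := norm_pos_iff.mpr v.2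
        rw [div_le_iff₀ hv0]
        have e1v := heq1 j hj1 hj2 (v : X)
        -- bound each term
        have hb1 : r1 j (v : X) ≤ R1 * ‖(v : X)‖ := by
          have h := (r1 j).le_opNorm (v : X)
          rw [Real.norm_eq_abs] at h
          exact (le_abs_self _).trans h
        have hb2 : -(m (u - w) (v : X)) ≤ D * (s * ‖(v : X)‖) := by
          have h := hms (u - w) (-(v : X))
          rw [map_neg, norm_neg] at h
          rw [← hD] at h
          linarith
        have hb3 : -(a u (v : X)) ≤ γa * U * ‖(v : X)‖ := by
          have h := habdd u (-(v : X))
          rw [map_neg, norm_neg] at h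
          linarith
        have hΔtinv : (0:ℝ) < 1 / Δt := by positivity
        have hb2' : -((1/Δt) * m (u - w) (v : X)) ≤ (1/Δt) * (D * (s * ‖(v : X)‖)) := by
          have := mul_le_mul_of_nonneg_left hb2 hΔtinv.le
          linarith
        have hbv : b (v : X) p = r1 j (v : X) - (1/Δt) * m (u - w) (v : X) - a u (v : X) := by
          linarith [e1v]
        rw [hbv]
        have : s * D / Δt * ‖(v : X)‖ = (1/Δt) * (D * (s * ‖(v : X)‖)) := by ring
        nlinarith [hb1, hb2', hb3]
      have hauu : αa * U ^ 2 ≤ a u u := hacoer u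
      -- pressure norm bound in convenient form
      set Q : ℝ := (R1 + γa * U + s * D / Δt) / β with hQ
      have hPQ : P ≤ Q := by
        rw [hQ, le_div_iff₀ hβ]
        linarith
      -- key algebraic inequality
      set S : ℝ := R1 + γa * R2 / β with hS
      set T : ℝ := s * R2 / β with hT
      have in1 : 2 * S * U ≤ αa * U ^ 2 + S ^ 2 / αa := by
        have h : αa * U ^ 2 + S ^ 2 / αa - 2 * S * U = (αa * U - S) ^ 2 / αa := by
          field_simp
          ring
        linarith [div_nonneg (sq_nonneg (αa * U - S)) hαa.le, h]
      have in2 : 2 * T * D ≤ D ^ 2 + T ^ 2 := by nlinarith [sq_nonneg (T - D)]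
      have hkey : 2 * Δt * (R1 * U + R2 * Q) - D ^ 2 - Δt * (αa * U ^ 2) ≤
          Δt * (R1 ^ 2 / αa + (2 / β) * (1 + γa / αa) * R1 * R2 +
            (s ^ 2 / Δt + γa ^ 2 / αa) * R2 ^ 2 / β ^ 2) := by
        have hexp : 2 * Δt * (R1 * U + R2 * Q) - D ^ 2 - Δt * (αa * U ^ 2) =
            Δt * (2 * S * U) + 2 * Δt * (R1 * R2) / β + 2 * T * D - D ^ 2 -
              Δt * (αa * U ^ 2) := by
          rw [hQ, hS, hT]
          field_simp
          ring
        have hexp2 : Δt * (R1 ^ 2 / αa + (2 / β) * (1 + γa / αa) * R1 * R2 +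
              (s ^ 2 / Δt + γa ^ 2 / αa) * R2 ^ 2 / β ^ 2) =
            Δt * (αa * U ^ 2 + S ^ 2 / αa) + 2 * Δt * (R1 * R2) / β + (D ^ 2 + T ^ 2) -
              Δt * (αa * U ^ 2) - D ^ 2 := by
          rw [hS, hT]
          field_simp
          ring
        have in1' : Δt * (2 * S * U) ≤ Δt * (αa * U ^ 2 + S ^ 2 / αa) :=
          mul_le_mul_of_nonneg_left in1 hΔt.le
        rw [hexp, hexp2]
        linarith [in1', in2]
      -- chain everything
      rw [heqm, ← hs2]
      have h1 : 2 * Δt * (r1 j u) ≤ 2 * Δt * (R1 * U) :=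
        mul_le_mul_of_nonneg_left hr1u (by positivity)
      have h2 : 2 * Δt * (-(r2 j p)) ≤ 2 * Δt * (R2 * P) :=
        mul_le_mul_of_nonneg_left hr2p (by positivity)
      have h3 : 2 * Δt * (R2 * P) ≤ 2 * Δt * (R2 * Q) :=
        mul_le_mul_of_nonneg_left (mul_le_mul_of_nonneg_left hPQ hR2n) (by positivity)
      have h4 : Δt * (αa * U ^ 2) ≤ Δt * a u u :=
        mul_le_mul_of_nonneg_left hauu hΔt.le
      linarith [h1, h2, h3, h4, hkey]
    -- telescoping by induction
    have main : ∀ k : ℕ, k ≤ K →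
        m (eu k) (eu k) + Δt * ∑ j ∈ Finset.Icc 1 k, a (eu j) (eu j) ≤
          Δt * ∑ j ∈ Finset.Icc 1 k,
            (‖r1 j‖ ^ 2 / αa + (2 / β) * (1 + γa / αa) * ‖r1 j‖ * ‖r2 j‖ +
              (γm / Δt + γa ^ 2 / αa) * ‖r2 j‖ ^ 2 / β ^ 2) := by
      intro k
      induction k with
      | zero => intro _; simp [heu0]
      | succ n ih =>
        intro hk
        have h1 := ih (Nat.le_of_succ_le hk)
        have h2 := step (n+1) (Nat.le_add_left 1 n) hk
        simp only [Nat.add_sub_cancel] at h2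
        rw [Finset.sum_Icc_succ_top (Nat.le_add_left 1 n),
          Finset.sum_Icc_succ_top (Nat.le_add_left 1 n)]
        linarith [h1, h2]
    exact fun k _ hk2 => main k hk2
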